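/- Tracial matrix Hölder inequality: for all matrices A, B ∈ M_n(ℂ) and p, q ∈ (1, ∞) with 1/p + 1/q = 1, |Tr(A† B)| ≤ ‖A‖_p ‖B‖_q, where ‖A‖_p = (Tr|A|^p)^{1/p} is the Schatten p-norm. -/

import Mathlib

open scoped Matrix Kronecker ComplexOrder

open Matrix in
noncomputable def matFun {n : Type*} [Fintype n] [DecidableEq n]
    (f : ℝ → ℝ) (A : Matrix n n ℂ) : Matrix n n ℂ :=
  if hA : A.IsHermitian then
    (hA.eigenvectorUnitary : Matrix n n ℂ) *
      Matrix.diagonal (fun i => (f (hA.eigenvalues i) : ℂ)) *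
      star (hA.eigenvectorUnitary : Matrix n n ℂ)
  else 0

noncomputable def matLog {n : Type*} [Fintype n] [DecidableEq n]
    (A : Matrix n n ℂ) : Matrix n n ℂ := matFun Real.log A

noncomputable def vnEntropy {n : Type*} [Fintype n] [DecidableEq n]
    (ρ : Matrix n n ℂ) : ℝ := -(Matrix.trace (ρ * matLog ρ)).re

noncomputable def relEnt {n : Type*} [Fintype n] [DecidableEq n]
    (ρ σ : Matrix n n ℂ) : ℝ := (Matrix.trace (ρ * (matLog ρ - matLog σ))).re

noncomputable def matAbs {m n : Type*} [Fintype m] [Fintype n] [DecidableEq n]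
    (A : Matrix m n ℂ) : Matrix n n ℂ := matFun Real.sqrt (Aᴴ * A)

noncomputable def traceNorm {m n : Type*} [Fintype m] [Fintype n] [DecidableEq n]
    (A : Matrix m n ℂ) : ℝ := (Matrix.trace (matAbs A)).re

noncomputable def schattenNorm {m n : Type*} [Fintype m] [Fintype n] [DecidableEq n]
    (p : ℝ) (A : Matrix m n ℂ) : ℝ :=
  (Matrix.trace (matFun (fun x => x ^ p) (matAbs A))).re ^ (1 / p)

noncomputable def specSup {n : Type*} [Fintype n] [DecidableEq n]
    (A : Matrix n n ℂ) : ℝ :=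
  if hA : A.IsHermitian then sSup (Set.range hA.eigenvalues) else 0

noncomputable def opNorm {m n : Type*} [Fintype m] [Fintype n] [DecidableEq n]
    (A : Matrix m n ℂ) : ℝ := specSup (matAbs A)

section helpers
open Matrix Finset
variable {n : Type*} [Fintype n] [DecidableEq n]

lemma trace_matFun (f : ℝ → ℝ) {M : Matrix n n ℂ} (hM : M.IsHermitian) :
    Matrix.trace (matFun f M) = ∑ i, (f (hM.eigenvalues i) : ℂ) := by
  rw [matFun, dif_pos hM, Matrix.trace_mul_cycle,
    Matrix.UnitaryGroup.star_mul_self, one_mul, Matrix.trace_diagonal]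

lemma matAbs_eq (A : Matrix n n ℂ) :
    matAbs A = ((Matrix.isHermitian_conjTranspose_mul_self A).eigenvectorUnitary : Matrix n n ℂ) *
      Matrix.diagonal (fun i =>
        (Real.sqrt ((Matrix.isHermitian_conjTranspose_mul_self A).eigenvalues i) : ℂ)) *
      star ((Matrix.isHermitian_conjTranspose_mul_self A).eigenvectorUnitary : Matrix n n ℂ) := by
  rw [matAbs, matFun, dif_pos (Matrix.isHermitian_conjTranspose_mul_self A)]

lemma posSemidef_matAbs (A : Matrix n n ℂ) : (matAbs A).PosSemidef := by
  rw [matAbs_eq]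
  exact (Matrix.posSemidef_diagonal_iff.mpr fun i => by
    rw [Complex.nonneg_iff]; exact ⟨by simp [Real.sqrt_nonneg], by simp⟩).mul_mul_conjTranspose_same _

lemma matAbs_mul_self (A : Matrix n n ℂ) : matAbs A * matAbs A = Aᴴ * A := by
  set hH := Matrix.isHermitian_conjTranspose_mul_self A with hHdef
  rw [matAbs_eq]
  have hU : star (hH.eigenvectorUnitary : Matrix n n ℂ) * (hH.eigenvectorUnitary : Matrix n n ℂ)
      = 1 := Matrix.UnitaryGroup.star_mul_self _
  have hs := hH.spectral_theorem
  rw [Unitary.conjStarAlgAut_apply] at hs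
  calc _ = (hH.eigenvectorUnitary : Matrix n n ℂ) *
        (Matrix.diagonal (fun i => (Real.sqrt (hH.eigenvalues i) : ℂ)) *
          (star (hH.eigenvectorUnitary : Matrix n n ℂ) * (hH.eigenvectorUnitary : Matrix n n ℂ)) *
          Matrix.diagonal (fun i => (Real.sqrt (hH.eigenvalues i) : ℂ))) *
        star (hH.eigenvectorUnitary : Matrix n n ℂ) := by simp only [Matrix.mul_assoc]
    _ = (hH.eigenvectorUnitary : Matrix n n ℂ) * Matrix.diagonal (RCLike.ofReal ∘ hH.eigenvalues) *
        star (hH.eigenvectorUnitary : Matrix n n ℂ) := by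
      have hnn : ∀ i, (Real.sqrt (hH.eigenvalues i) : ℂ) * (Real.sqrt (hH.eigenvalues i) : ℂ)
          = (hH.eigenvalues i : ℂ) := fun i => by
        rw [← Complex.ofReal_mul,
          Real.mul_self_sqrt ((Matrix.posSemidef_conjTranspose_mul_self A).eigenvalues_nonneg i)]
      rw [hU, Matrix.mul_one, Matrix.diagonal_mul_diagonal]
      simp only [hnn]
      rfl
    _ = Aᴴ * A := hs.symm

lemma schattenNorm_eq (p : ℝ) (A : Matrix n n ℂ) :
    schattenNorm p A = (∑ i, ((posSemidef_matAbs A).1.eigenvalues i) ^ p) ^ (1/p) := by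
  rw [schattenNorm, trace_matFun _ (posSemidef_matAbs A).1]
  congr 1
  rw [Complex.re_sum]
  simp

lemma psd_diag_re_nonneg {M : Matrix n n ℂ} (hM : M.PosSemidef) (i : n) : 0 ≤ (M i i).re := by
  have h := hM.dotProduct_mulVec_nonneg (Pi.single i 1)
  rw [Complex.nonneg_iff] at h
  convert h.1 using 2
  simp [dotProduct, Pi.single_apply, Matrix.mulVec_single]

lemma col_zero {F : Matrix n n ℂ} {i : n} (h : (Fᴴ * F) i i = 0) (k : n) : F k i = 0 := by
  have h1 : ∑ l, Complex.normSq (F l i) = 0 := by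
    have h2 := congrArg Complex.re h
    rw [Matrix.mul_apply, Complex.re_sum] at h2
    rw [show Complex.re 0 = 0 from rfl] at h2
    rw [← h2]
    refine Finset.sum_congr rfl fun l _ => ?_
    rw [Matrix.conjTranspose_apply]
    rw [show star (F l i) = (starRingEnd ℂ) (F l i) from rfl, ← Complex.normSq_eq_conj_mul_self,
      Complex.ofReal_re]
  have h3 := (Finset.sum_eq_zero_iff_of_nonneg
    (fun l _ => Complex.normSq_nonneg (F l i))).mp h1 k (Finset.mem_univ k)
  exact Complex.normSq_eq_zero.mp h3

lemma one_sub_mul_conjTranspose_posSemidef (X : Matrix n n ℂ) (e : n → ℝ)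
    (hX : Xᴴ * X = Matrix.diagonal (fun i => (e i : ℂ))) (he : ∀ i, e i ≤ 1) :
    (1 - X * Xᴴ).PosSemidef := by
  have hMpsd : (X * Xᴴ).PosSemidef := Matrix.posSemidef_self_mul_conjTranspose X
  have hM : (X * Xᴴ).IsHermitian := hMpsd.1
  have hdiagpsd : (Matrix.diagonal (fun i => ((1 - e i : ℝ) : ℂ))).PosSemidef := by
    refine Matrix.posSemidef_diagonal_iff.mpr fun i => ?_
    rw [Complex.nonneg_iff]
    refine ⟨by simp [sub_nonneg, he i], by simp⟩
  have hsub : (1 : Matrix n n ℂ) - Matrix.diagonal (fun i => (e i : ℂ))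
      = Matrix.diagonal (fun i => ((1 - e i : ℝ) : ℂ)) := by
    rw [← Matrix.diagonal_one, Matrix.diagonal_sub]
    congr 1; funext i; push_cast; ring
  have h1 : (X * Xᴴ - (X * Xᴴ) * (X * Xᴴ)).PosSemidef := by
    have heq : X * Xᴴ - (X * Xᴴ) * (X * Xᴴ)
        = X * ((1 : Matrix n n ℂ) - Matrix.diagonal (fun i => (e i : ℂ))) * Xᴴ := by
      rw [Matrix.mul_sub, Matrix.sub_mul, mul_one]
      congr 1
      rw [mul_assoc, ← mul_assoc Xᴴ, hX, ← mul_assoc, mul_assoc]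
    rw [heq, hsub]
    exact Matrix.PosSemidef.mul_mul_conjTranspose_same hdiagpsd X
  have heig : ∀ i, hM.eigenvalues i ≤ 1 := by
    intro i
    by_contra hlt
    push_neg at hlt
    set t := hM.eigenvalues i with ht
    set v : n → ℂ := (WithLp.equiv 2 (n → ℂ)) (hM.eigenvectorBasis i) with hvdef
    have hv : (X * Xᴴ) *ᵥ v = t • v := hM.mulVec_eigenvectorBasis i
    have hvn : dotProduct (star v) v = 1 := by
      have h := orthonormal_iff_ite.mp hM.eigenvectorBasis.orthonormal i i
      rw [EuclideanSpace.inner_eq_star_dotProduct] at h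
      rw [dotProduct_comm]
      simp at h
      exact h
    have hv2 : (X * Xᴴ * (X * Xᴴ)) *ᵥ v = t • t • v := by
      rw [← Matrix.mulVec_mulVec, hv, Matrix.mulVec_smul, hv]
    have h2 := h1.dotProduct_mulVec_nonneg v
    rw [Matrix.sub_mulVec, dotProduct_sub, hv, hv2, dotProduct_smul,
      dotProduct_smul, dotProduct_smul, hvn] at h2
    have h3 : (0 : ℂ) ≤ ((t - t * t : ℝ) : ℂ) := by
      convert h2 using 1
      simp [Complex.real_smul]
    rw [Complex.zero_le_real] at h3
    nlinarith
  have h4 : (1 : Matrix n n ℂ) - X * Xᴴ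
      = (hM.eigenvectorUnitary : Matrix n n ℂ) *
        ((1 : Matrix n n ℂ) - Matrix.diagonal (RCLike.ofReal ∘ hM.eigenvalues)) *
        star (hM.eigenvectorUnitary : Matrix n n ℂ) := by
    have hUU' : (hM.eigenvectorUnitary : Matrix n n ℂ) *
        star (hM.eigenvectorUnitary : Matrix n n ℂ) = 1 :=
      Matrix.mem_unitaryGroup_iff.mp hM.eigenvectorUnitary.2
    have hs := hM.spectral_theorem
    rw [Unitary.conjStarAlgAut_apply] at hs
    rw [Matrix.mul_sub, Matrix.sub_mul, mul_one, hUU', ← hs]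
  rw [h4]
  have hmid : ((1 : Matrix n n ℂ) - Matrix.diagonal (RCLike.ofReal ∘ hM.eigenvalues)).PosSemidef := by
    have heq2 : (1 : Matrix n n ℂ) - Matrix.diagonal (RCLike.ofReal ∘ hM.eigenvalues)
        = Matrix.diagonal (fun i => ((1 - hM.eigenvalues i : ℝ) : ℂ)) := by
      rw [← Matrix.diagonal_one, Matrix.diagonal_sub]
      congr 1; funext i; push_cast; simp [RCLike.ofReal]
    rw [heq2]
    refine Matrix.posSemidef_diagonal_iff.mpr fun i => ?_
    rw [Complex.nonneg_iff]
    exact ⟨by simp [sub_nonneg, heig i], by simp⟩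
  have h5 := hmid.mul_mul_conjTranspose_same (hM.eigenvectorUnitary : Matrix n n ℂ)
  convert h5 using 2
  exact Matrix.star_eq_conjTranspose _

end helpers

theorem stmt_7 {n : Type*} [Fintype n] [DecidableEq n]
    (A B : Matrix n n ℂ) (p q : ℝ) (hp : 1 < p) (hq : 1 < q)
    (hpq : 1 / p + 1 / q = 1) :
    ‖Matrix.trace (Aᴴ * B)‖ ≤ schattenNorm p A * schattenNorm q B := by
  classical
  have hp0 : p ≠ 0 := by positivity
  have hq0 : q ≠ 0 := by positivity
  have h1p : (0:ℝ) < 1/p := by positivity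
  have h1q : (0:ℝ) < 1/q := by positivity
  have hA : (matAbs A).PosSemidef := posSemidef_matAbs A
  have hB : (matAbs B).PosSemidef := posSemidef_matAbs B
  set P : Matrix n n ℂ := (hA.1.eigenvectorUnitary : Matrix n n ℂ) with hPdef
  set Q : Matrix n n ℂ := (hB.1.eigenvectorUnitary : Matrix n n ℂ) with hQdef
  set μ : n → ℝ := hA.1.eigenvalues with hμdef
  set ρ : n → ℝ := hB.1.eigenvalues with hρdef
  have hμ0 : ∀ i, 0 ≤ μ i := hA.eigenvalues_nonneg
  have hρ0 : ∀ j, 0 ≤ ρ j := hB.eigenvalues_nonneg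
  have hP1 : star P * P = 1 := Matrix.UnitaryGroup.star_mul_self _
  have hP2 : P * star P = 1 := Matrix.mem_unitaryGroup_iff.mp hA.1.eigenvectorUnitary.2
  have hQ1 : star Q * Q = 1 := Matrix.UnitaryGroup.star_mul_self _
  have hQ2 : Q * star Q = 1 := Matrix.mem_unitaryGroup_iff.mp hB.1.eigenvectorUnitary.2
  have hPdiag : star P * matAbs A * P = Matrix.diagonal (fun i => (μ i : ℂ)) :=
    by have h := hA.1.conjStarAlgAut_star_eigenvectorUnitary
       rw [Unitary.conjStarAlgAut_star_apply] at h; exact h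
  have hQdiag : star Q * matAbs B * Q = Matrix.diagonal (fun j => (ρ j : ℂ)) :=
    by have h := hB.1.conjStarAlgAut_star_eigenvectorUnitary
       rw [Unitary.conjStarAlgAut_star_apply] at h; exact h
  -- key diagonalizations
  have keyF : (A * P)ᴴ * (A * P)
      = Matrix.diagonal (fun i => ((μ i : ℂ) * (μ i : ℂ))) := by
    have h1 : (A * P)ᴴ * (A * P) = star P * (matAbs A * (P * star P) * matAbs A) * P := by
      rw [hP2, Matrix.mul_one, matAbs_mul_self A, Matrix.conjTranspose_mul,
        ← Matrix.star_eq_conjTranspose]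
      simp only [Matrix.mul_assoc]
    rw [h1]
    calc star P * (matAbs A * (P * star P) * matAbs A) * P
        = (star P * matAbs A * P) * (star P * matAbs A * P) := by
          simp only [Matrix.mul_assoc]
      _ = _ := by rw [hPdiag, Matrix.diagonal_mul_diagonal]
  have keyG : (B * Q)ᴴ * (B * Q)
      = Matrix.diagonal (fun j => ((ρ j : ℂ) * (ρ j : ℂ))) := by
    have h1 : (B * Q)ᴴ * (B * Q) = star Q * (matAbs B * (Q * star Q) * matAbs B) * Q := by
      rw [hQ2, Matrix.mul_one, matAbs_mul_self B, Matrix.conjTranspose_mul,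
        ← Matrix.star_eq_conjTranspose]
      simp only [Matrix.mul_assoc]
    rw [h1]
    calc star Q * (matAbs B * (Q * star Q) * matAbs B) * Q
        = (star Q * matAbs B * Q) * (star Q * matAbs B * Q) := by
          simp only [Matrix.mul_assoc]
      _ = _ := by rw [hQdiag, Matrix.diagonal_mul_diagonal]
  have hFcol : ∀ i, μ i = 0 → ∀ k, (A * P) k i = 0 := by
    intro i hi k
    refine col_zero (i := i) ?_ k
    rw [keyF, Matrix.diagonal_apply_eq, hi]
    simp
  have hGcol0 : ∀ j, ρ j = 0 → ∀ k, (B * Q) k j = 0 := by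
    intro j hj k
    refine col_zero (i := j) ?_ k
    rw [keyG, Matrix.diagonal_apply_eq, hj]
    simp
  -- normalized matrices
  set g : ℝ → ℝ := fun t => if t = 0 then 0 else t⁻¹ with hgdef
  set V : Matrix n n ℂ := (A * P) * Matrix.diagonal (fun i => (g (μ i) : ℂ)) with hVdef
  set X : Matrix n n ℂ := (B * Q) * Matrix.diagonal (fun j => (g (ρ j) : ℂ)) with hXdef
  have hgstarμ : star (fun i => (g (μ i) : ℂ)) = fun i => (g (μ i) : ℂ) := by
    funext i; simp [Complex.conj_ofReal]
  have hgstarρ : star (fun j => (g (ρ j) : ℂ)) = fun j => (g (ρ j) : ℂ) := by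
    funext j; simp [Complex.conj_ofReal]
  have hstarμ : star (fun i => (μ i : ℂ)) = fun i => (μ i : ℂ) := by
    funext i; simp [Complex.conj_ofReal]
  have hstarρ : star (fun j => (ρ j : ℂ)) = fun j => (ρ j : ℂ) := by
    funext j; simp [Complex.conj_ofReal]
  have hVF : V * Matrix.diagonal (fun i => (μ i : ℂ)) = A * P := by
    rw [hVdef, Matrix.mul_assoc, Matrix.diagonal_mul_diagonal]
    ext k i
    rw [Matrix.mul_diagonal]
    by_cases hi : μ i = 0
    · rw [hFcol i hi k]; ring
    · rw [hgdef]; simp only [if_neg hi]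
      rw [← Complex.ofReal_mul, inv_mul_cancel₀ hi, Complex.ofReal_one, mul_one]
  have hXF : X * Matrix.diagonal (fun j => (ρ j : ℂ)) = B * Q := by
    rw [hXdef, Matrix.mul_assoc, Matrix.diagonal_mul_diagonal]
    ext k j
    rw [Matrix.mul_diagonal]
    by_cases hj : ρ j = 0
    · rw [hGcol0 j hj k]; ring
    · rw [hgdef]; simp only [if_neg hj]
      rw [← Complex.ofReal_mul, inv_mul_cancel₀ hj, Complex.ofReal_one, mul_one]
  have hVV : Vᴴ * V
      = Matrix.diagonal (fun i => (((if μ i = 0 then 0 else 1 : ℝ)) : ℂ)) := by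
    rw [hVdef, Matrix.conjTranspose_mul, Matrix.diagonal_conjTranspose, hgstarμ]
    calc Matrix.diagonal (fun i => (g (μ i) : ℂ)) * (A * P)ᴴ *
          ((A * P) * Matrix.diagonal (fun i => (g (μ i) : ℂ)))
        = Matrix.diagonal (fun i => (g (μ i) : ℂ)) * ((A * P)ᴴ * (A * P)) *
          Matrix.diagonal (fun i => (g (μ i) : ℂ)) := by
          simp only [Matrix.mul_assoc]
      _ = _ := by
          rw [keyF, Matrix.diagonal_mul_diagonal, Matrix.diagonal_mul_diagonal]
          refine congrArg Matrix.diagonal (funext fun i => ?_)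
          by_cases hi : μ i = 0
          · simp [hgdef, hi]
          · rw [hgdef]; simp only [if_neg hi]
            have hne : (μ i : ℂ) ≠ 0 := Complex.ofReal_ne_zero.mpr hi
            push_cast
            field_simp
  have hXX : Xᴴ * X
      = Matrix.diagonal (fun j => (((if ρ j = 0 then 0 else 1 : ℝ)) : ℂ)) := by
    rw [hXdef, Matrix.conjTranspose_mul, Matrix.diagonal_conjTranspose, hgstarρ]
    calc Matrix.diagonal (fun j => (g (ρ j) : ℂ)) * (B * Q)ᴴ *
          ((B * Q) * Matrix.diagonal (fun j => (g (ρ j) : ℂ)))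
        = Matrix.diagonal (fun j => (g (ρ j) : ℂ)) * ((B * Q)ᴴ * (B * Q)) *
          Matrix.diagonal (fun j => (g (ρ j) : ℂ)) := by
          simp only [Matrix.mul_assoc]
      _ = _ := by
          rw [keyG, Matrix.diagonal_mul_diagonal, Matrix.diagonal_mul_diagonal]
          refine congrArg Matrix.diagonal (funext fun j => ?_)
          by_cases hj : ρ j = 0
          · simp [hgdef, hj]
          · rw [hgdef]; simp only [if_neg hj]
            have hne : (ρ j : ℂ) ≠ 0 := Complex.ofReal_ne_zero.mpr hj
            push_cast
            field_simp
  -- the unitary C and the matrices S, Gm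
  set C : Matrix n n ℂ := star Q * P with hCdef
  have hC1 : Cᴴ * C = 1 := by
    rw [← Matrix.star_eq_conjTranspose, hCdef, star_mul, star_star]
    calc star P * Q * (star Q * P) = star P * (Q * star Q) * P := by
          simp only [Matrix.mul_assoc]
      _ = 1 := by rw [hQ2, Matrix.mul_one, hP1]
  have hC2 : C * Cᴴ = 1 := by
    rw [← Matrix.star_eq_conjTranspose, hCdef, star_mul, star_star]
    calc star Q * P * (star P * Q) = star Q * (P * star P) * Q := by
          simp only [Matrix.mul_assoc]
      _ = 1 := by rw [hP2, Matrix.mul_one, hQ1]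
  set Gm : Matrix n n ℂ := Vᴴ * X with hGmdef
  set S : Matrix n n ℂ := (A * P)ᴴ * (B * Q) with hSdef
  have htr : Matrix.trace (Aᴴ * B) = Matrix.trace (S * C) := by
    have h1 : S * C = star P * (Aᴴ * B) * P := by
      rw [hSdef, hCdef]
      simp only [← Matrix.star_eq_conjTranspose, star_mul, Matrix.mul_assoc]
      rw [← Matrix.mul_assoc Q, hQ2, Matrix.one_mul]
    rw [h1, Matrix.trace_mul_cycle, hP2, Matrix.one_mul]
  have hSd : S = Matrix.diagonal (fun i => (μ i : ℂ)) * Gm *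
      Matrix.diagonal (fun j => (ρ j : ℂ)) := by
    rw [hSdef, hGmdef, ← hVF, ← hXF]
    simp only [Matrix.conjTranspose_mul, Matrix.diagonal_conjTranspose, hstarμ,
      Matrix.mul_assoc]
  -- scalar layer
  set d : n → n → ℝ := fun i j => ‖Gm i j‖ * ‖C j i‖ with hddef
  have hd0 : ∀ i j, 0 ≤ d i j := fun i j =>
    mul_nonneg (norm_nonneg _) (norm_nonneg _)
  have habs : ‖Matrix.trace (Aᴴ * B)‖
      ≤ ∑ i, ∑ j, (μ i * ρ j) * d i j := by
    rw [htr]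
    have h1 : Matrix.trace (S * C) = ∑ i, ∑ j, S i j * C j i := by
      simp [Matrix.trace, Matrix.diag, Matrix.mul_apply]
    rw [h1]
    refine le_trans (norm_sum_le _ _) ?_
    refine Finset.sum_le_sum fun i _ => le_trans (norm_sum_le _ _) ?_
    refine Finset.sum_le_sum fun j _ => ?_
    rw [norm_mul, hSd, Matrix.mul_diagonal, Matrix.diagonal_mul, norm_mul, norm_mul,
      Complex.norm_real, Complex.norm_real, Real.norm_of_nonneg (hμ0 i), Real.norm_of_nonneg (hρ0 j),
      hddef]
    apply le_of_eq
    ring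
  have hGrow : ∀ i, ∑ j, ‖Gm i j‖ ^ 2 ≤ 1 := by
    intro i
    have e1 : ∑ j, ‖Gm i j‖ ^ 2 = ((Gm * Gmᴴ) i i).re := by
      rw [Matrix.mul_apply, Complex.re_sum]
      refine Finset.sum_congr rfl fun j _ => ?_
      rw [Matrix.conjTranspose_apply, Complex.sq_norm,
        show star (Gm i j) = (starRingEnd ℂ) (Gm i j) from rfl,
        Complex.mul_conj, Complex.ofReal_re]
    have e2 : Gm * Gmᴴ = Vᴴ * V - Vᴴ * (1 - X * Xᴴ) * V := by
      have e3 : Gm * Gmᴴ = Vᴴ * (X * Xᴴ) * V := by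
        rw [hGmdef]
        simp only [Matrix.conjTranspose_mul, Matrix.conjTranspose_conjTranspose,
          Matrix.mul_assoc]
      rw [e3, Matrix.mul_sub, Matrix.mul_one, Matrix.sub_mul, sub_sub_cancel]
    have hpsd : (Vᴴ * (1 - X * Xᴴ) * V).PosSemidef :=
      (one_sub_mul_conjTranspose_posSemidef X _ hXX
        (fun j => by split_ifs <;> norm_num)).conjTranspose_mul_mul_same V
    have e4 := psd_diag_re_nonneg hpsd i
    have e5 : ((Vᴴ * V) i i).re = if μ i = 0 then 0 else 1 := by
      rw [hVV, Matrix.diagonal_apply_eq, Complex.ofReal_re]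
    rw [e1, e2, Matrix.sub_apply, Complex.sub_re, e5]
    have h6 : (if μ i = 0 then (0:ℝ) else 1) ≤ 1 := by split_ifs <;> norm_num
    linarith
  have hGcol : ∀ j, ∑ i, ‖Gm i j‖ ^ 2 ≤ 1 := by
    intro j
    have e1 : ∑ i, ‖Gm i j‖ ^ 2 = ((Gmᴴ * Gm) j j).re := by
      rw [Matrix.mul_apply, Complex.re_sum]
      refine Finset.sum_congr rfl fun i _ => ?_
      rw [Matrix.conjTranspose_apply, Complex.sq_norm,
        show star (Gm i j) = (starRingEnd ℂ) (Gm i j) from rfl,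
        ← Complex.normSq_eq_conj_mul_self, Complex.ofReal_re]
    have e2 : Gmᴴ * Gm = Xᴴ * X - Xᴴ * (1 - V * Vᴴ) * X := by
      have e3 : Gmᴴ * Gm = Xᴴ * (V * Vᴴ) * X := by
        rw [hGmdef]
        simp only [Matrix.conjTranspose_mul, Matrix.conjTranspose_conjTranspose,
          Matrix.mul_assoc]
      rw [e3, Matrix.mul_sub, Matrix.mul_one, Matrix.sub_mul, sub_sub_cancel]
    have hpsd : (Xᴴ * (1 - V * Vᴴ) * X).PosSemidef :=
      (one_sub_mul_conjTranspose_posSemidef V _ hVV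
        (fun i => by split_ifs <;> norm_num)).conjTranspose_mul_mul_same X
    have e4 := psd_diag_re_nonneg hpsd j
    have e5 : ((Xᴴ * X) j j).re = if ρ j = 0 then 0 else 1 := by
      rw [hXX, Matrix.diagonal_apply_eq, Complex.ofReal_re]
    rw [e1, e2, Matrix.sub_apply, Complex.sub_re, e5]
    have h6 : (if ρ j = 0 then (0:ℝ) else 1) ≤ 1 := by split_ifs <;> norm_num
    linarith
  have hCrow : ∀ i, ∑ j, ‖C j i‖ ^ 2 = 1 := by
    intro i
    have e1 : ∑ j, ‖C j i‖ ^ 2 = ((Cᴴ * C) i i).re := by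
      rw [Matrix.mul_apply, Complex.re_sum]
      refine Finset.sum_congr rfl fun j _ => ?_
      rw [Matrix.conjTranspose_apply, Complex.sq_norm,
        show star (C j i) = (starRingEnd ℂ) (C j i) from rfl,
        ← Complex.normSq_eq_conj_mul_self, Complex.ofReal_re]
    rw [e1, hC1, Matrix.one_apply_eq, Complex.one_re]
  have hCcol : ∀ j, ∑ i, ‖C j i‖ ^ 2 = 1 := by
    intro j
    have e1 : ∑ i, ‖C j i‖ ^ 2 = ((C * Cᴴ) j j).re := by
      rw [Matrix.mul_apply, Complex.re_sum]
      refine Finset.sum_congr rfl fun i _ => ?_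
      rw [Matrix.conjTranspose_apply, Complex.sq_norm,
        show star (C j i) = (starRingEnd ℂ) (C j i) from rfl,
        Complex.mul_conj, Complex.ofReal_re]
    rw [e1, hC2, Matrix.one_apply_eq, Complex.one_re]
  have hrow : ∀ i, ∑ j, d i j ≤ 1 := by
    intro i
    simp only [hddef]
    refine le_trans (Real.sum_mul_le_sqrt_mul_sqrt Finset.univ _ _) ?_
    rw [hCrow i, Real.sqrt_one, mul_one]
    have h2 := Real.sqrt_le_sqrt (hGrow i)
    simpa using h2
  have hcol : ∀ j, ∑ i, d i j ≤ 1 := by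
    intro j
    simp only [hddef]
    refine le_trans (Real.sum_mul_le_sqrt_mul_sqrt Finset.univ _ _) ?_
    rw [hCcol j, Real.sqrt_one, mul_one]
    have h2 := Real.sqrt_le_sqrt (hGcol j)
    simpa using h2
  have hconj : Real.HolderConjugate p q :=
    Real.holderConjugate_iff.mpr ⟨hp, by simpa [one_div] using hpq⟩
  have holder := Real.inner_le_Lp_mul_Lq_of_nonneg (s := (Finset.univ : Finset (n × n)))
    (f := fun x : n × n => μ x.1 * d x.1 x.2 ^ (1/p))
    (g := fun x : n × n => ρ x.2 * d x.1 x.2 ^ (1/q)) hconj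
    (fun x _ => mul_nonneg (hμ0 _) (Real.rpow_nonneg (hd0 _ _) _))
    (fun x _ => mul_nonneg (hρ0 _) (Real.rpow_nonneg (hd0 _ _) _))
  have hL : ∑ x : n × n, (μ x.1 * d x.1 x.2 ^ (1/p)) * (ρ x.2 * d x.1 x.2 ^ (1/q))
      = ∑ i, ∑ j, (μ i * ρ j) * d i j := by
    simp only [Fintype.sum_prod_type]
    refine Finset.sum_congr rfl fun i _ => Finset.sum_congr rfl fun j _ => ?_
    rw [mul_mul_mul_comm]
    congr 1
    rcases (hd0 i j).eq_or_lt with h0 | h0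
    · rw [← h0, Real.zero_rpow (ne_of_gt h1p), zero_mul]
    · rw [← Real.rpow_add h0, hpq, Real.rpow_one]
  have hfple : ∑ x : n × n, (μ x.1 * d x.1 x.2 ^ (1/p)) ^ p ≤ ∑ i, μ i ^ p := by
    simp only [Fintype.sum_prod_type]
    refine Finset.sum_le_sum fun i _ => ?_
    have e1 : ∀ j, (μ i * d i j ^ (1/p)) ^ p = μ i ^ p * d i j := by
      intro j
      rw [Real.mul_rpow (hμ0 i) (Real.rpow_nonneg (hd0 i j) _), ← Real.rpow_mul (hd0 i j),
        one_div, inv_mul_cancel₀ hp0, Real.rpow_one]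
    calc ∑ j, (μ i * d i j ^ (1/p)) ^ p = μ i ^ p * ∑ j, d i j := by
          rw [Finset.mul_sum]; exact Finset.sum_congr rfl fun j _ => e1 j
      _ ≤ μ i ^ p * 1 :=
          mul_le_mul_of_nonneg_left (hrow i) (Real.rpow_nonneg (hμ0 i) p)
      _ = μ i ^ p := mul_one _
  have hgple : ∑ x : n × n, (ρ x.2 * d x.1 x.2 ^ (1/q)) ^ q ≤ ∑ j, ρ j ^ q := by
    simp only [Fintype.sum_prod_type]
    rw [Finset.sum_comm]
    refine Finset.sum_le_sum fun j _ => ?_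
    have e1 : ∀ i, (ρ j * d i j ^ (1/q)) ^ q = ρ j ^ q * d i j := by
      intro i
      rw [Real.mul_rpow (hρ0 j) (Real.rpow_nonneg (hd0 i j) _), ← Real.rpow_mul (hd0 i j),
        one_div, inv_mul_cancel₀ hq0, Real.rpow_one]
    calc ∑ i, (ρ j * d i j ^ (1/q)) ^ q = ρ j ^ q * ∑ i, d i j := by
          rw [Finset.mul_sum]; exact Finset.sum_congr rfl fun i _ => e1 i
      _ ≤ ρ j ^ q * 1 := mul_le_mul_of_nonneg_left (hcol j) (Real.rpow_nonneg (hρ0 j) q)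
      _ = ρ j ^ q := mul_one _
  have hfinal : ∑ i, ∑ j, (μ i * ρ j) * d i j
      ≤ (∑ i, μ i ^ p) ^ (1/p) * (∑ j, ρ j ^ q) ^ (1/q) := by
    rw [← hL]
    refine holder.trans (mul_le_mul ?_ ?_ ?_ ?_)
    · exact Real.rpow_le_rpow (Finset.sum_nonneg fun x _ =>
        Real.rpow_nonneg (mul_nonneg (hμ0 _) (Real.rpow_nonneg (hd0 _ _) _)) _) hfple h1p.le
    · exact Real.rpow_le_rpow (Finset.sum_nonneg fun x _ =>
        Real.rpow_nonneg (mul_nonneg (hρ0 _) (Real.rpow_nonneg (hd0 _ _) _)) _) hgple h1q.le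
    · exact Real.rpow_nonneg (Finset.sum_nonneg fun x _ =>
        Real.rpow_nonneg (mul_nonneg (hρ0 _) (Real.rpow_nonneg (hd0 _ _) _)) _) _
    · exact Real.rpow_nonneg (Finset.sum_nonneg fun i _ => Real.rpow_nonneg (hμ0 i) p) _
  rw [schattenNorm_eq p A, schattenNorm_eq q B]
  exact habs.trans hfinal
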